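/- Let H be obtained from a fixed binary matrix H̃ of rank n−η (with columns indexed by a set of size n) by appending k rows drawn independently and uniformly at random from F₂ⁿ. Then the conditional probability that Rank(H) = (n−η)+ω equals ζ(η,ω,k) = S(ω, k−ω)·2^{−(k−ω)(η−ω)}·∏_{i=1}^{ω}(1 − 2^{−(η+1−i)}) for each 0 ≤ ω ≤ min{η,k}, where S(ω,l) = Σ_{0 ≤ i₁ ≤ ⋯ ≤ i_l ≤ ω} 2^{-(i₁+⋯+i_l)}. -/

import Mathlib

open Finset Submodule Module

/-- `S ω l` = sum over all nondecreasing tuples `0 ≤ i₁ ≤ ⋯ ≤ i_l ≤ ω`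
of `2^{-(i₁+⋯+i_l)}`, with `S ω 0 = 1`. -/
noncomputable def S (ω l : ℕ) : ℝ := by
  classical
  exact ∑ f ∈ Finset.univ.filter (fun f : Fin l → Fin (ω + 1) => Monotone f),
    (1 / 2 : ℝ) ^ (∑ i, (f i : ℕ))

/-- The conditional Kovalenko rank distribution value. -/
noncomputable def zeta (η ω k : ℕ) : ℝ :=
  S ω (k - ω) * (1 / 2 : ℝ) ^ ((k - ω) * (η - ω)) *
    ∏ i ∈ Finset.Icc 1 ω, (1 - (1 / 2 : ℝ) ^ (η + 1 - i))


lemma S_zero_right (ω : ℕ) : S ω 0 = 1 := by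
  unfold S
  rw [Finset.univ_unique, Finset.filter_singleton]
  simp [Subsingleton.monotone]

lemma S_zero_left (l : ℕ) : S 0 l = 1 := by
  unfold S
  have h : ∀ f : Fin l → Fin 1, Monotone f :=
    fun f _ _ _ => le_of_eq (Subsingleton.elim _ _)
  rw [Finset.filter_true_of_mem (fun f _ => h f)]
  have h2 : ∀ f : Fin l → Fin 1, ∑ i, ((f i : ℕ)) = 0 := by
    intro f; simp [Fin.fin_one_eq_zero (f _)]
  simp only [h2, pow_zero, Finset.sum_const, nsmul_eq_mul, mul_one]
  simp

lemma S_rec (ω l : ℕ) : S (ω + 1) (l + 1) = S (ω + 1) l + (1/2 : ℝ)^(l+1) * S ω (l+1) := by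
  classical
  unfold S
  rw [← Finset.sum_filter_add_sum_filter_not
    (Finset.univ.filter (fun f : Fin (l+1) → Fin (ω+2) => Monotone f)) (fun f => f 0 = 0)]
  congr 1
  · rw [Finset.filter_filter]
    refine Finset.sum_bij' (fun f _ => f ∘ Fin.succ) (fun g _ => Fin.cons 0 g) ?_ ?_ ?_ ?_ ?_
    · intro f hf
      simp only [Finset.mem_filter, Finset.mem_univ, true_and] at hf ⊢
      exact hf.1.comp Fin.strictMono_succ.monotone
    · intro g hg
      simp only [Finset.mem_filter, Finset.mem_univ, true_and] at hg ⊢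
      refine ⟨?_, Fin.cons_zero _ _⟩
      intro a b hab
      induction a using Fin.cases with
      | zero => simp [Fin.cons_zero, Fin.zero_le]
      | succ a =>
        induction b using Fin.cases with
        | zero => exact absurd (Fin.le_zero_iff.mp hab) (Fin.succ_ne_zero a)
        | succ b =>
          simp only [Fin.cons_succ]
          exact hg (by simpa using hab)
    · intro f hf
      simp only [Finset.mem_filter, Finset.mem_univ, true_and] at hf
      funext i
      induction i using Fin.cases with
      | zero => simp [hf.2]
      | succ i => simp
    · intro g hg
      funext i; simp
    · intro f hf
      simp only [Finset.mem_filter, Finset.mem_univ, true_and] at hf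
      rw [Fin.sum_univ_succ]
      simp [hf.2]
  · rw [Finset.filter_filter, Finset.mul_sum]
    have key : ∀ f : Fin (l+1) → Fin (ω+2), (Monotone f ∧ ¬ f 0 = 0) → ∀ i, f i ≠ 0 := by
      intro f hf i
      have h0 : f 0 ≤ f i := hf.1 (Fin.zero_le i)
      intro h
      exact hf.2 (le_antisymm (h ▸ h0) (Fin.zero_le _))
    refine Finset.sum_bij' (fun f hf => fun i => Fin.pred (f i)
        (key f (by simpa using (Finset.mem_filter.mp hf).2) i))
      (fun g _ => fun i => Fin.succ (g i)) ?_ ?_ ?_ ?_ ?_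
    · intro f hf
      simp only [Finset.mem_filter, Finset.mem_univ, true_and] at hf ⊢
      intro a b hab
      have h2 := hf.1 hab
      rw [Fin.le_def] at h2 ⊢
      simp only [Fin.coe_pred]
      omega
    · intro g hg
      simp only [Finset.mem_filter, Finset.mem_univ, true_and] at hg ⊢
      constructor
      · intro a b hab
        exact Fin.succ_le_succ_iff.mpr (hg hab)
      · simp [Fin.succ_ne_zero]
    · intro f hf; funext i; simp
    · intro g hg; funext i; simp
    · intro f hf
      simp only [Finset.mem_filter, Finset.mem_univ, true_and] at hf
      have h1 : ∀ i, 1 ≤ (f i : ℕ) := fun i =>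
        Nat.pos_of_ne_zero (fun h0 => key f hf i (Fin.ext (by simp [h0])))
      have hsum : ∑ i, ((f i : ℕ)) = (l+1) + ∑ i : Fin (l+1), (((f i : ℕ)) - 1) := by
        have h2 : ∀ i ∈ Finset.univ, (f i : ℕ) = (((f i : ℕ)) - 1) + 1 :=
          fun i _ => (Nat.succ_pred_eq_of_pos (h1 i)).symm
        rw [Finset.sum_congr rfl h2, Finset.sum_add_distrib]
        simp [add_comm]
      rw [hsum, pow_add]
      have : ∑ i : Fin (l+1), ((f i : ℕ) - 1)
          = ∑ i : Fin (l+1), ((Fin.pred (f i) (key f hf i) : ℕ)) :=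
        Finset.sum_congr rfl (fun i _ => by simp [Fin.coe_pred])
      rw [this]


lemma zeta_base (η : ℕ) : zeta η 0 0 = 1 := by
  simp [zeta, S_zero_right]

lemma zeta_zero (η : ℕ) (k : ℕ) : zeta η 0 (k+1) = zeta η 0 k * (1/2 : ℝ)^η := by
  simp only [zeta, S_zero_left, Nat.sub_zero, Finset.Icc_self, one_mul]
  have e : (k+1) * η = k * η + η := by ring
  rw [e, pow_add]
  ring

lemma zeta_mid (η ω k : ℕ) (h1 : ω + 1 ≤ k) (h2 : ω + 1 ≤ η) :
    zeta η (ω+1) (k+1)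
      = zeta η (ω+1) k * (1/2 : ℝ)^(η-(ω+1)) + zeta η ω k * (1 - (1/2 : ℝ)^(η-ω)) := by
  obtain ⟨a, rfl⟩ := Nat.exists_eq_add_of_le h2
  obtain ⟨b, rfl⟩ := Nat.exists_eq_add_of_le h1
  have p1 : ω + 1 + a - (ω + 1) = a := by omega
  have p2 : ω + 1 + b + 1 - (ω + 1) = b + 1 := by omega
  have p3 : ω + 1 + b - (ω + 1) = b := by omega
  have p4 : ω + 1 + a - ω = a + 1 := by omega
  have p5 : ω + 1 + b - ω = b + 1 := by omega
  have pprod : ∏ i ∈ Finset.Icc 1 (ω+1), (1 - (1/2 : ℝ) ^ (ω + 1 + a + 1 - i))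
      = (∏ i ∈ Finset.Icc 1 ω, (1 - (1/2 : ℝ) ^ (ω + 1 + a + 1 - i)))
        * (1 - (1/2 : ℝ)^(a+1)) := by
    rw [Finset.prod_Icc_succ_top (by omega), show ω+1+a+1-(ω+1) = a+1 from by omega]
  simp only [zeta, p1, p2, p3, p4, p5, pprod]
  rw [S_rec ω b]
  have e1 : (b+1)*a = b*a + a := by ring
  have e2 : (b+1)*(a+1) = b*a + a + (b+1) := by ring
  rw [e1, e2, pow_add, pow_add, pow_add]
  ring

lemma zeta_diag (η k : ℕ) (h2 : k + 1 ≤ η) :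
    zeta η (k+1) (k+1) = zeta η k k * (1 - (1/2 : ℝ)^(η-k)) := by
  obtain ⟨a, rfl⟩ := Nat.exists_eq_add_of_le h2
  have p1 : k + 1 + a - (k+1) = a := by omega
  have p2 : k + 1 - (k+1) = 0 := by omega
  have p3 : k - k = 0 := by omega
  have p4 : k + 1 + a - k = a + 1 := by omega
  have pprod : ∏ i ∈ Finset.Icc 1 (k+1), (1 - (1/2 : ℝ) ^ (k + 1 + a + 1 - i))
      = (∏ i ∈ Finset.Icc 1 k, (1 - (1/2 : ℝ) ^ (k + 1 + a + 1 - i)))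
        * (1 - (1/2 : ℝ)^(a+1)) := by
    rw [Finset.prod_Icc_succ_top (by omega), show k+1+a+1-(k+1) = a+1 from by omega]
  simp only [zeta, p1, p2, p3, p4, pprod, S_zero_right]
  ring

lemma card_comp_eq {α β : Type*} [Fintype α] [Fintype β] (f : α → β) (c : ℕ)
    (hf : ∀ b : β, Nat.card {a : α // f a = b} = c) (Q : β → Prop) :
    Nat.card {a : α // Q (f a)} = c * Nat.card {b : β // Q b} := by
  classical
  rw [Nat.card_eq_fintype_card, Nat.card_eq_fintype_card, Fintype.card_subtype,
    Fintype.card_subtype]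
  rw [Finset.card_eq_sum_card_fiberwise (f := f) (t := Finset.univ.filter Q)
    (fun a ha => by simp only [Finset.coe_filter, Finset.mem_coe, Finset.mem_filter, Finset.mem_univ, true_and, Set.mem_setOf_eq] at ha ⊢; exact ha)]
  have h : ∀ b ∈ Finset.univ.filter Q,
      ((Finset.univ.filter (fun a => Q (f a))).filter (fun a => f a = b)).card = c := by
    intro b hb
    simp only [Finset.mem_filter, Finset.mem_univ, true_and] at hb
    rw [Finset.filter_filter]
    have he : (Finset.univ.filter fun a => Q (f a) ∧ f a = b)
        = Finset.univ.filter (fun a => f a = b) := by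
      apply Finset.filter_congr
      intro a _
      constructor
      · exact fun h => h.2
      · exact fun h => ⟨h ▸ hb, h⟩
    rw [he, ← Fintype.card_subtype, ← Nat.card_eq_fintype_card, hf b]
  rw [Finset.sum_congr rfl h, Finset.sum_const, smul_eq_mul, mul_comm]


set_option linter.unusedSectionVars false

section Counting
variable {V : Type*} [AddCommGroup V] [Module (ZMod 2) V] [Fintype V]

lemma card_submodule (W : Submodule (ZMod 2) V) : Nat.card W = 2 ^ finrank (ZMod 2) W := by
  classical
  have : Fintype W := Fintype.ofFinite W
  rw [Nat.card_eq_fintype_card, card_eq_pow_finrank (K := ZMod 2)]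
  simp [ZMod.card]

lemma finrank_sup_span_singleton {s : Submodule (ZMod 2) V} {v : V} (hv : v ∉ s) :
    finrank (ZMod 2) ((Submodule.span (ZMod 2) {v}) ⊔ s : Submodule (ZMod 2) V)
      = finrank (ZMod 2) s + 1 := by
  have hv0 : v ≠ 0 := fun h => hv (h ▸ s.zero_mem)
  have hdisj : Submodule.span (ZMod 2) {v} ⊓ s = ⊥ := by
    rw [eq_bot_iff]
    rintro x ⟨hx1, hx2⟩
    obtain ⟨c, rfl⟩ := Submodule.mem_span_singleton.mp hx1
    rcases eq_or_ne c 0 with hc | hc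
    · simp [hc]
    · exact absurd (by simpa [smul_smul, inv_mul_cancel₀ hc] using s.smul_mem c⁻¹ hx2) hv
  have h := Submodule.finrank_sup_add_finrank_inf_eq (Submodule.span (ZMod 2) {v}) s
  rw [hdisj, finrank_bot, finrank_span_singleton hv0] at h
  omega

lemma card_ext (s : Submodule (ZMod 2) V) (ω : ℕ) :
    Nat.card {v : V // finrank (ZMod 2) ((Submodule.span (ZMod 2) {v}) ⊔ s : Submodule (ZMod 2) V) = ω}
      = (if ω = finrank (ZMod 2) s then 2 ^ ω else 0)
        + (if ω = finrank (ZMod 2) s + 1 then 2 ^ finrank (ZMod 2) V - 2 ^ finrank (ZMod 2) s else 0) := by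
  classical
  have hmem : ∀ v : V, v ∈ s →
      finrank (ZMod 2) ((Submodule.span (ZMod 2) {v}) ⊔ s : Submodule (ZMod 2) V)
        = finrank (ZMod 2) s := by
    intro v hv
    rw [sup_eq_right.mpr (Submodule.span_le.mpr (Set.singleton_subset_iff.mpr hv))]
  by_cases h1 : ω = finrank (ZMod 2) s
  · subst h1
    have he : {v : V // finrank (ZMod 2) ((Submodule.span (ZMod 2) {v}) ⊔ s : Submodule (ZMod 2) V) = finrank (ZMod 2) s} ≃ s :=
      Equiv.subtypeEquivRight (fun v => by
        constructor
        · intro h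
          by_contra hv
          rw [_root_.finrank_sup_span_singleton hv] at h
          omega
        · exact hmem v)
    rw [Nat.card_congr he, card_submodule]
    simp
  · by_cases h2 : ω = finrank (ZMod 2) s + 1
    · subst h2
      have he : {v : V // finrank (ZMod 2) ((Submodule.span (ZMod 2) {v}) ⊔ s : Submodule (ZMod 2) V) = finrank (ZMod 2) s + 1} ≃ {v : V // ¬ (v ∈ s)} :=
        Equiv.subtypeEquivRight (fun v => by
          constructor
          · intro h hv
            rw [hmem v hv] at h
            omega
          · intro hv
            exact _root_.finrank_sup_span_singleton hv)
      have hV : Fintype.card V = 2 ^ finrank (ZMod 2) V := by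
        rw [card_eq_pow_finrank (K := ZMod 2), ZMod.card]
      have hs : Fintype.card s = 2 ^ finrank (ZMod 2) s := by
        rw [← Nat.card_eq_fintype_card, card_submodule]
      rw [Nat.card_congr he, Nat.card_eq_fintype_card, Fintype.card_subtype_compl, hV, hs]
      simp [h1]
    · simp only [if_neg h1, if_neg h2, add_zero]
      have : IsEmpty {v : V // finrank (ZMod 2) ((Submodule.span (ZMod 2) {v}) ⊔ s : Submodule (ZMod 2) V) = ω} := by
        refine ⟨fun ⟨v, hv⟩ => ?_⟩
        by_cases hvs : v ∈ s
        · rw [hmem v hvs] at hv; omega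
        · rw [_root_.finrank_sup_span_singleton hvs] at hv; omega
      exact Nat.card_of_isEmpty

lemma card_span_rank_gt (k ω : ℕ) (h : k < ω) :
    Nat.card {T : Fin k → V // finrank (ZMod 2) (Submodule.span (ZMod 2) (Set.range T)) = ω} = 0 := by
  have : IsEmpty {T : Fin k → V // finrank (ZMod 2) (Submodule.span (ZMod 2) (Set.range T)) = ω} := by
    refine ⟨fun ⟨T, hT⟩ => ?_⟩
    have hle := finrank_range_le_card (R := ZMod 2) T
    rw [Set.finrank] at hle
    simp only [Fintype.card_fin] at hle
    omega
  exact Nat.card_of_isEmpty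


lemma sum_if_card {α : Type*} [Fintype α] (p : α → Prop) [DecidablePred p] (c : ℕ) :
    ∑ a : α, (if p a then c else 0) = Nat.card {a : α // p a} * c := by
  rw [← Finset.sum_filter, Finset.sum_const, Nat.card_eq_fintype_card, Fintype.card_subtype,
    smul_eq_mul]

lemma count_key (k ω : ℕ) :
    Nat.card {T : Fin (k+1) → V // finrank (ZMod 2) (span (ZMod 2) (Set.range T)) = ω}
      = ∑ T' : Fin k → V,
          Nat.card {v : V // finrank (ZMod 2)
            ((span (ZMod 2) {v}) ⊔ span (ZMod 2) (Set.range T') : Submodule (ZMod 2) V) = ω} := by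
  classical
  have e1 : {p : V × (Fin k → V) // finrank (ZMod 2)
        ((span (ZMod 2) {p.1}) ⊔ span (ZMod 2) (Set.range p.2) : Submodule (ZMod 2) V) = ω}
      ≃ {T : Fin (k+1) → V // finrank (ZMod 2) (span (ZMod 2) (Set.range T)) = ω} :=
    Equiv.subtypeEquiv (Fin.consEquiv (fun _ => V)) (fun p => by
      rw [show (Fin.consEquiv (fun _ => V)) p = Fin.cons p.1 p.2 from rfl, Fin.range_cons,
        Submodule.span_insert])
  have e2 : {p : (Fin k → V) × V // finrank (ZMod 2)
        ((span (ZMod 2) {p.2}) ⊔ span (ZMod 2) (Set.range p.1) : Submodule (ZMod 2) V) = ω}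
      ≃ {p : V × (Fin k → V) // finrank (ZMod 2)
        ((span (ZMod 2) {p.1}) ⊔ span (ZMod 2) (Set.range p.2) : Submodule (ZMod 2) V) = ω} :=
    Equiv.subtypeEquiv (Equiv.prodComm _ _) (fun p => Iff.rfl)
  have e3 : {p : (Fin k → V) × V // finrank (ZMod 2)
        ((span (ZMod 2) {p.2}) ⊔ span (ZMod 2) (Set.range p.1) : Submodule (ZMod 2) V) = ω}
      ≃ Σ T' : Fin k → V, {v : V // finrank (ZMod 2)
        ((span (ZMod 2) {v}) ⊔ span (ZMod 2) (Set.range T') : Submodule (ZMod 2) V) = ω} :=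
    Equiv.subtypeProdEquivSigmaSubtype
      (fun (T' : Fin k → V) (v : V) => finrank (ZMod 2)
        ((span (ZMod 2) {v}) ⊔ span (ZMod 2) (Set.range T') : Submodule (ZMod 2) V) = ω)
  rw [Nat.card_congr ((e3.symm.trans e2).trans e1).symm, Nat.card_eq_fintype_card,
    Fintype.card_sigma]
  simp [Nat.card_eq_fintype_card]

lemma count_span_rank (k ω : ℕ) (hω : ω ≤ finrank (ZMod 2) V) (hωk : ω ≤ k) :
    (Nat.card {T : Fin k → V // finrank (ZMod 2) (Submodule.span (ZMod 2) (Set.range T)) = ω} : ℝ)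
      = 2 ^ (k * finrank (ZMod 2) V) * zeta (finrank (ZMod 2) V) ω k := by
  classical
  induction k generalizing ω with
  | zero =>
    obtain rfl : ω = 0 := Nat.le_zero.mp hωk
    have hall : ∀ T : Fin 0 → V, finrank (ZMod 2) (span (ZMod 2) (Set.range T)) = 0 := by
      intro T
      rw [Set.range_eq_empty, Submodule.span_empty, finrank_bot]
    rw [Nat.card_congr (Equiv.subtypeUnivEquiv hall)]
    simp [zeta_base, Nat.card_eq_fintype_card]
  | succ k ih =>
    have hkey : Nat.card {T : Fin (k+1) → V // finrank (ZMod 2) (span (ZMod 2) (Set.range T)) = ω}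
        = ∑ T' : Fin k → V,
          ((if ω = finrank (ZMod 2) (span (ZMod 2) (Set.range T')) then 2 ^ ω else 0)
            + (if ω = finrank (ZMod 2) (span (ZMod 2) (Set.range T')) + 1
                then 2 ^ finrank (ZMod 2) V - 2 ^ finrank (ZMod 2) (span (ZMod 2) (Set.range T'))
                else 0)) := by
      rw [count_key]
      exact Finset.sum_congr rfl (fun T' _ => card_ext (span (ZMod 2) (Set.range T')) ω)
    rw [Finset.sum_add_distrib] at hkey
    rcases ω with _ | ω'
    · -- ω = 0
      have h2 : ∀ T' : Fin k → V,
          (if (0:ℕ) = finrank (ZMod 2) (span (ZMod 2) (Set.range T')) + 1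
            then 2 ^ finrank (ZMod 2) V - 2 ^ finrank (ZMod 2) (span (ZMod 2) (Set.range T'))
            else 0) = 0 := by
        intro T'; rw [if_neg (by omega)]
      have h1 : ∀ T' : Fin k → V,
          (if (0:ℕ) = finrank (ZMod 2) (span (ZMod 2) (Set.range T')) then 2 ^ 0 else 0)
            = (if finrank (ZMod 2) (span (ZMod 2) (Set.range T')) = 0 then 2 ^ 0 else 0) := by
        intro T'
        by_cases h : finrank (ZMod 2) (span (ZMod 2) (Set.range T')) = 0
        · rw [if_pos h.symm, if_pos h]
        · rw [if_neg (fun hh => h hh.symm), if_neg h]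
      rw [Finset.sum_congr rfl (fun T' _ => h2 T'), Finset.sum_const, smul_zero, add_zero,
        Finset.sum_congr rfl (fun T' _ => h1 T'),
        sum_if_card (fun T' : Fin k → V => finrank (ZMod 2) (span (ZMod 2) (Set.range T')) = 0)]
        at hkey
      rw [hkey]
      push_cast
      rw [ih 0 (by omega) (by omega), zeta_zero]
      have : ((k+1) * finrank (ZMod 2) V) = k * finrank (ZMod 2) V + finrank (ZMod 2) V := by ring
      rw [this, pow_add]
      have h2d : (2:ℝ) ^ finrank (ZMod 2) V ≠ 0 := by positivity
      simp only [one_div, inv_pow]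
      field_simp
    · -- ω = ω' + 1
      have h1 : ∀ T' : Fin k → V,
          (if (ω'+1:ℕ) = finrank (ZMod 2) (span (ZMod 2) (Set.range T')) then 2 ^ (ω'+1) else 0)
            = (if finrank (ZMod 2) (span (ZMod 2) (Set.range T')) = ω'+1 then 2 ^ (ω'+1) else 0) := by
        intro T'
        by_cases h : finrank (ZMod 2) (span (ZMod 2) (Set.range T')) = ω'+1
        · rw [if_pos h.symm, if_pos h]
        · rw [if_neg (fun hh => h hh.symm), if_neg h]
      have h2 : ∀ T' : Fin k → V,
          (if (ω'+1:ℕ) = finrank (ZMod 2) (span (ZMod 2) (Set.range T')) + 1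
            then 2 ^ finrank (ZMod 2) V - 2 ^ finrank (ZMod 2) (span (ZMod 2) (Set.range T'))
            else 0)
          = (if finrank (ZMod 2) (span (ZMod 2) (Set.range T')) = ω'
              then 2 ^ finrank (ZMod 2) V - 2 ^ ω' else 0) := by
        intro T'
        by_cases h : finrank (ZMod 2) (span (ZMod 2) (Set.range T')) = ω'
        · rw [if_pos (by omega), if_pos h, h]
        · rw [if_neg (by omega), if_neg h]
      rw [Finset.sum_congr rfl (fun T' _ => h1 T'), Finset.sum_congr rfl (fun T' _ => h2 T'),
        sum_if_card (fun T' : Fin k → V => finrank (ZMod 2) (span (ZMod 2) (Set.range T')) = ω'+1),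
        sum_if_card (fun T' : Fin k → V => finrank (ZMod 2) (span (ZMod 2) (Set.range T')) = ω')]
        at hkey
      rw [hkey]
      have hsub : (2:ℕ) ^ ω' ≤ 2 ^ finrank (ZMod 2) V := Nat.pow_le_pow_right (by omega) (by omega)
      push_cast [Nat.cast_sub hsub]
      -- decompose d
      obtain ⟨c, hc⟩ := Nat.exists_eq_add_of_le hω
      rcases Nat.lt_or_ge (ω'+1) (k+1) with hlt | hge
      · -- ω' + 1 ≤ k
        have hk1 : ω' + 1 ≤ k := by omega
        rw [ih (ω'+1) hω hk1, ih ω' (by omega) (by omega), zeta_mid _ _ _ hk1 hω]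
        rw [hc]
        have e0 : ω' + 1 + c - (ω'+1) = c := by omega
        have e1 : ω' + 1 + c - ω' = c + 1 := by omega
        have e2 : (k+1) * (ω'+1+c) = k * (ω'+1+c) + (ω' + 1 + c) := by ring
        rw [e0, e1, e2, pow_add, pow_add, pow_add, pow_add]
        have h2c : (2:ℝ) ^ c ≠ 0 := by positivity
        have h2o : (2:ℝ) ^ ω' ≠ 0 := by positivity
        simp only [one_div, inv_pow]
        field_simp
        ring
      · -- ω' + 1 = k + 1, i.e. ω' = k
        have hk : ω' = k := by omega
        subst hk
        rw [card_span_rank_gt ω' (ω'+1) (by omega)]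
        rw [ih ω' (by omega) (by omega), zeta_diag _ _ hω]
        rw [hc]
        have e1 : ω' + 1 + c - ω' = c + 1 := by omega
        have e2 : (ω'+1) * (ω'+1+c) = ω' * (ω'+1+c) + (ω' + 1 + c) := by ring
        rw [e1, e2, pow_add, pow_add, pow_add]
        have h2c : (2:ℝ) ^ c ≠ 0 := by positivity
        simp only [one_div, inv_pow]
        field_simp
        ring

lemma card_fiber_single (W : Submodule (ZMod 2) V) (t : V ⧸ W) :
    Nat.card {v : V // W.mkQ v = t} = Nat.card W := by
  obtain ⟨v₀, rfl⟩ := W.mkQ_surjective t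
  refine Nat.card_congr ⟨fun v => ⟨v.1 - v₀, ?_⟩, fun w => ⟨v₀ + w.1, ?_⟩, ?_, ?_⟩
  · have : W.mkQ (v.1 - v₀) = 0 := by
      rw [map_sub, v.2, sub_self]
    rwa [← LinearMap.mem_ker, Submodule.ker_mkQ] at this
  · have : W.mkQ w.1 = 0 := by
      rw [← LinearMap.mem_ker, Submodule.ker_mkQ]
      exact w.2
    rw [map_add, this, add_zero]
  · intro v; ext; simp
  · intro w; ext; simp

lemma card_fiber_pred (W : Submodule (ZMod 2) V) (k : ℕ)
    (Q : (Fin k → V ⧸ W) → Prop) :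
    Nat.card {R : Fin k → V // Q (fun i => W.mkQ (R i))}
      = (Nat.card W) ^ k * Nat.card {T : Fin k → V ⧸ W // Q T} := by
  classical
  letI : Fintype (V ⧸ W) := Fintype.ofFinite _
  refine card_comp_eq (fun (R : Fin k → V) => (fun i => W.mkQ (R i))) ((Nat.card W)^k) ?_ Q
  intro T
  have e1 : {R : Fin k → V // (fun i => W.mkQ (R i)) = T}
      ≃ {R : Fin k → V // ∀ i, W.mkQ (R i) = T i} :=
    Equiv.subtypeEquivRight (fun R => funext_iff)
  have e2 : {R : Fin k → V // ∀ i, W.mkQ (R i) = T i} ≃ ∀ i : Fin k, {v : V // W.mkQ v = T i} :=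
    Equiv.subtypePiEquivPi (p := fun i v => W.mkQ v = T i)
  rw [Nat.card_congr (e1.trans e2), Nat.card_pi]
  rw [Finset.prod_congr rfl (fun i _ => card_fiber_single W (T i)), Finset.prod_const,
    Finset.card_univ, Fintype.card_fin]

lemma card_fiber_rank (W : Submodule (ZMod 2) V) (k ω : ℕ) :
    Nat.card {R : Fin k → V // finrank (ZMod 2)
        (Submodule.span (ZMod 2) (Set.range (fun i => W.mkQ (R i)))) = ω}
      = (Nat.card W) ^ k * Nat.card {T : Fin k → V ⧸ W // finrank (ZMod 2)
          (Submodule.span (ZMod 2) (Set.range T)) = ω} :=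
  card_fiber_pred W k
    (fun T => finrank (ZMod 2) (Submodule.span (ZMod 2) (Set.range T)) = ω)

end Counting

lemma finrank_sup_quot {K V : Type*} [Field K] [AddCommGroup V] [Module K V]
    [FiniteDimensional K V] (W U : Submodule K V) :
    finrank K (W ⊔ U : Submodule K V) = finrank K W + finrank K (U.map W.mkQ) := by
  have h1 : (W ⊔ U).map W.mkQ = U.map W.mkQ := by
    rw [Submodule.map_sup]
    have : W.map W.mkQ = ⊥ := by
      rw [eq_bot_iff]
      rintro x ⟨y, hy, rfl⟩
      exact (Submodule.mem_bot _).mpr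
        (by rw [Submodule.mkQ_apply, Submodule.Quotient.mk_eq_zero]; exact hy)
    rw [this, bot_sup_eq]
  set g := W.mkQ.comp (W ⊔ U).subtype with hg
  have hrange : LinearMap.range g = (W ⊔ U).map W.mkQ := by
    rw [hg, LinearMap.range_comp, Submodule.range_subtype]
  have hker : LinearMap.ker g = Submodule.comap (W ⊔ U).subtype W := by
    rw [hg, LinearMap.ker_comp, Submodule.ker_mkQ]
  have hkerrank : finrank K (LinearMap.ker g) = finrank K W := by
    rw [hker]
    exact LinearEquiv.finrank_eq (Submodule.comapSubtypeEquivOfLe le_sup_left)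
  have := LinearMap.finrank_range_add_finrank_ker g
  rw [hrange, h1, hkerrank] at this
  omega

lemma rank_fromRows_quotient {m₀ k n : ℕ} (Ht : Matrix (Fin m₀) (Fin n) (ZMod 2))
    (R : Fin k → Fin n → ZMod 2) :
    (Matrix.fromRows Ht (Matrix.of R)).rank
      = Ht.rank + finrank (ZMod 2)
          (Submodule.span (ZMod 2)
            (Set.range (fun i => (Submodule.span (ZMod 2) (Set.range Ht)).mkQ (R i)))) := by
  set W := Submodule.span (ZMod 2) (Set.range Ht) with hW
  rw [Matrix.rank_eq_finrank_span_row, Matrix.rank_eq_finrank_span_row]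
  rw [show (Matrix.fromRows Ht (Matrix.of R)).row = Sum.elim Ht R from rfl, show Ht.row = Ht from rfl]
  have hr : Set.range (Sum.elim Ht R) = Set.range Ht ∪ Set.range R := by
    show Set.range (Sum.elim Ht R) = _
    exact Set.Sum.elim_range Ht R
  rw [hr, Submodule.span_union, ← hW]
  rw [finrank_sup_quot W (Submodule.span (ZMod 2) (Set.range R))]
  congr 1
  rw [Submodule.map_span, ← Set.range_comp]
  rfl

/-- Appending `k` i.i.d. uniform rows from `F₂ⁿ` to a fixed matrix `H̃` of rank `n − η`,
the probability (uniform counting over all `2^{kn}` choices of the new rows) that the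
resulting matrix has rank `(n − η) + ω` equals `ζ(η,ω,k)`. -/
theorem stmt_4 (n m₀ η k ω : ℕ) (hη : η ≤ n) (hωη : ω ≤ η) (hωk : ω ≤ k)
    (Ht : Matrix (Fin m₀) (Fin n) (ZMod 2)) (hrank : Ht.rank = n - η) :
    (Nat.card {R : Fin k → Fin n → ZMod 2 //
        (Matrix.fromRows Ht (Matrix.of R)).rank = (n - η) + ω} : ℝ) / 2 ^ (k * n)
      = zeta η ω k := by
  classical
  set W := Submodule.span (ZMod 2) (Set.range Ht) with hWdef
  have hWrank : finrank (ZMod 2) W = n - η := by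
    exact (Matrix.rank_eq_finrank_span_row Ht).symm.trans hrank
  have hVrank : finrank (ZMod 2) (Fin n → ZMod 2) = n := by
    rw [Module.finrank_fin_fun]
  have hQrank : finrank (ZMod 2) ((Fin n → ZMod 2) ⧸ W) = η := by
    have h := Submodule.finrank_quotient_add_finrank W
    rw [hVrank, hWrank] at h
    omega
  have hcond : ∀ R : Fin k → Fin n → ZMod 2,
      ((Matrix.fromRows Ht (Matrix.of R)).rank = (n - η) + ω)
        ↔ (finrank (ZMod 2)
            (Submodule.span (ZMod 2) (Set.range (fun i => W.mkQ (R i)))) = ω) := by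
    intro R
    rw [rank_fromRows_quotient, hrank, ← hWdef, add_right_inj]
  rw [Nat.card_congr (Equiv.subtypeEquivRight hcond), card_fiber_rank W k ω,
    card_submodule W, hWrank]
  push_cast
  letI : Fintype ((Fin n → ZMod 2) ⧸ W) := Fintype.ofFinite _
  rw [count_span_rank k ω (by rw [hQrank]; exact hωη) hωk, hQrank]
  have hpow : ((2:ℝ)^(n-η))^k * 2^(k*η) = 2^(k*n) := by
    obtain ⟨c, rfl⟩ := Nat.exists_eq_add_of_le hη
    rw [show η + c - η = c from by omega, ← pow_mul, ← pow_add]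
    congr 1
    ring
  rw [div_eq_iff (by positivity : ((2:ℝ)^(k*n)) ≠ 0), ← hpow]
  ring
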